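/- arXiv:0909.0799 — 3 statements merged into one kernel-verified Lean document; each statement's English description precedes it below -/
import Mathlib

section
/- Let D be a Dedekind domain and H a congruence subgroup of SL₂(D). Then there exists g₀ ∈ SL₂(D) such that c(H,g) ⊆ c(H,g₀) for every g ∈ SL₂(D); consequently the ideal-theoretic sum Σ_{g ∈ SL₂(D)} c(H,g) of all cusp amplitudes of H equals c(H,g₀), and is itself a cusp amplitude of H. -/
open Matrix

/-- The translation matrix `T(r) = [[1, r], [0, 1]]` in `SL₂(R)`. -/
def Tm (R : Type*) [CommRing R] (r : R) : Matrix.SpecialLinearGroup (Fin 2) R :=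
  ⟨!![1, r; 0, 1], by simp [Matrix.det_fin_two_of]⟩

/-- The principal congruence subgroup `SL₂(R, 𝔮)`, the kernel of reduction mod `𝔮`. -/
def SLmod (R : Type*) [CommRing R] (q : Ideal R) :
    Subgroup (Matrix.SpecialLinearGroup (Fin 2) R) :=
  (Matrix.SpecialLinearGroup.map (Ideal.Quotient.mk q)).ker


/-- `H` is a congruence subgroup: it contains a principal congruence subgroup of
nonzero level. -/
def IsCongruence {R : Type*} [CommRing R]
    (H : Subgroup (Matrix.SpecialLinearGroup (Fin 2) R)) : Prop :=
  ∃ q : Ideal R, q ≠ ⊥ ∧ SLmod R q ≤ H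

/-- `q` is the level `l(H)` of `H`: the largest ideal all of whose associated translations
lie in the normal core of `H` (equivalently, the largest ideal contained in the
quasi-level of `H`). -/
def IsLevel {R : Type*} [CommRing R]
    (H : Subgroup (Matrix.SpecialLinearGroup (Fin 2) R)) (q : Ideal R) : Prop :=
  (∀ r ∈ q, Tm R r ∈ H.normalCore) ∧
    ∀ I : Ideal R, (∀ r ∈ I, Tm R r ∈ H.normalCore) → I ≤ q

/-- `c` is the cusp amplitude `c(H,g)` of `H` at `g`: the largest ideal contained in the
quasi-amplitude `b(H,g) = {x | g · T(x) · g⁻¹ ∈ H}`. -/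
def IsCuspAmplitude {R : Type*} [CommRing R]
    (H : Subgroup (Matrix.SpecialLinearGroup (Fin 2) R))
    (g : Matrix.SpecialLinearGroup (Fin 2) R) (c : Ideal R) : Prop :=
  (∀ x ∈ c, g * Tm R x * g⁻¹ ∈ H) ∧
    ∀ I : Ideal R, (∀ x ∈ I, g * Tm R x * g⁻¹ ∈ H) → I ≤ c

section Aux

variable {D : Type*} [CommRing D]

/-- entrywise congruence of 2×2 matrices mod an ideal -/
def MatCongr (J : Ideal D) (M N : Matrix (Fin 2) (Fin 2) D) : Prop :=
  ∀ i j, M i j - N i j ∈ J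

lemma MatCongr.mul {J : Ideal D} {M M' N N' : Matrix (Fin 2) (Fin 2) D}
    (h : MatCongr J M M') (h' : MatCongr J N N') : MatCongr J (M * N) (M' * N') := by
  intro i j
  rw [Matrix.mul_apply, Matrix.mul_apply, ← Finset.sum_sub_distrib]
  refine Submodule.sum_mem _ fun k _ => ?_
  have heq : M i k * N k j - M' i k * N' k j
      = M i k * (N k j - N' k j) + (M i k - M' i k) * N' k j := by ring
  rw [heq]
  exact J.add_mem (J.mul_mem_left _ (h' k j)) (J.mul_mem_right _ (h i k))

lemma MatCongr.adjugate {J : Ideal D} {M N : Matrix (Fin 2) (Fin 2) D}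
    (h : MatCongr J M N) : MatCongr J M.adjugate N.adjugate := by
  have hsym : ∀ i j, N i j - M i j ∈ J := fun i j => by
    have := J.neg_mem (h i j); rwa [neg_sub] at this
  intro i j
  rw [Matrix.adjugate_fin_two M, Matrix.adjugate_fin_two N]
  fin_cases i <;> fin_cases j <;> simp <;>
    first
      | exact h _ _
      | exact hsym _ _
      | (rw [neg_add_eq_sub]; exact hsym _ _)

lemma mem_SLmod_of_congr {q : Ideal D} {X Y : Matrix.SpecialLinearGroup (Fin 2) D}
    (h : MatCongr q (X : Matrix (Fin 2) (Fin 2) D) (Y : Matrix (Fin 2) (Fin 2) D)) :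
    X * Y⁻¹ ∈ SLmod D q := by
  have hXY : Matrix.SpecialLinearGroup.map (Ideal.Quotient.mk q) X
      = Matrix.SpecialLinearGroup.map (Ideal.Quotient.mk q) Y := by
    apply Subtype.ext
    rw [Matrix.SpecialLinearGroup.map_apply_coe, Matrix.SpecialLinearGroup.map_apply_coe]
    ext i j
    simp only [RingHom.mapMatrix_apply, Matrix.map_apply]
    rw [Ideal.Quotient.mk_eq_mk_iff_sub_mem]
    exact h i j
  rw [SLmod, MonoidHom.mem_ker, _root_.map_mul, _root_.map_inv, hXY, mul_inv_cancel]

lemma Tm_mem_SLmod {q : Ideal D} {x : D} (hx : x ∈ q) : Tm D x ∈ SLmod D q := by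
  have : Tm D x * (1 : Matrix.SpecialLinearGroup (Fin 2) D)⁻¹ ∈ SLmod D q := by
    apply mem_SLmod_of_congr
    intro i j
    fin_cases i <;> fin_cases j <;>
      simp [Tm, Matrix.SpecialLinearGroup.coe_one, hx, q.zero_mem]
  simpa using this

lemma SLmod_normal (q : Ideal D) : (SLmod D q).Normal := MonoidHom.normal_ker _

lemma Tm_add (x y : D) : Tm D (x + y) = Tm D x * Tm D y := by
  apply Subtype.ext
  rw [Matrix.SpecialLinearGroup.coe_mul]
  simp only [Matrix.SpecialLinearGroup.coe_mul, Tm]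
  ext i j
  fin_cases i <;> fin_cases j <;> simp [Matrix.mul_apply, Fin.sum_univ_two, add_comm]

end Aux
section Approx

variable {D : Type*} [CommRing D] [IsDomain D] [IsDedekindDomain D]

lemma crt2 {D : Type*} [CommRing D] {q₁ q₂ : Ideal D} (hco : IsCoprime q₁ q₂) (r₁ r₂ : D) :
    ∃ A : D, A - r₁ ∈ q₁ ∧ A - r₂ ∈ q₂ := by
  obtain ⟨i, hi, j, hj, hij⟩ := Ideal.isCoprime_iff_exists.mp hco
  refine ⟨r₂ * i + r₁ * j, ?_, ?_⟩
  · have heq : r₂ * i + r₁ * j - r₁ = r₂ * i - r₁ * i := by linear_combination r₁ * hij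
    rw [heq]
    exact q₁.sub_mem (q₁.mul_mem_left _ hi) (q₁.mul_mem_left _ hi)
  · have heq : r₂ * i + r₁ * j - r₂ = r₁ * j - r₂ * j := by linear_combination r₂ * hij
    rw [heq]
    exact q₂.sub_mem (q₂.mul_mem_left _ hj) (q₂.mul_mem_left _ hj)

lemma coprime_of_isMaximal_not_le {D : Type*} [CommRing D] {p I : Ideal D}
    (hp : p.IsMaximal) (h : ¬ I ≤ p) : IsCoprime p I := by
  rw [Ideal.isCoprime_iff_sup_eq]
  by_contra hne
  exact h (le_sup_right.trans_eq (hp.eq_of_le hne le_sup_left).symm)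

set_option maxHeartbeats 1000000 in
lemma exists_SL_congr {q₁ q₂ : Ideal D} (hco : IsCoprime q₁ q₂) (h1 : q₁ ≠ ⊥) (h2 : q₂ ≠ ⊥)
    (g₁ g₂ : Matrix.SpecialLinearGroup (Fin 2) D) :
    ∃ g₃ : Matrix.SpecialLinearGroup (Fin 2) D,
      MatCongr q₁ (g₃ : Matrix (Fin 2) (Fin 2) D) (g₁ : Matrix (Fin 2) (Fin 2) D) ∧
      MatCongr q₂ (g₃ : Matrix (Fin 2) (Fin 2) D) (g₂ : Matrix (Fin 2) (Fin 2) D) := by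
  obtain ⟨M1, hdet1⟩ := g₁
  obtain ⟨M2, hdet2⟩ := g₂
  rw [Matrix.det_fin_two] at hdet1 hdet2
  set a1 := M1 0 0 with ha1; set b1 := M1 0 1 with hb1
  set c1 := M1 1 0 with hc1; set d1 := M1 1 1 with hd1
  set a2 := M2 0 0 with ha2; set b2 := M2 0 1 with hb2
  set c2 := M2 1 0 with hc2; set d2 := M2 1 1 with hd2
  -- choose A ≠ 0 with the right congruences
  obtain ⟨A, hA1, hA2, hAne⟩ : ∃ A : D, A - a1 ∈ q₁ ∧ A - a2 ∈ q₂ ∧ A ≠ 0 := by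
    obtain ⟨A0, hA01, hA02⟩ := crt2 hco a1 a2
    by_cases h0 : A0 = 0
    · obtain ⟨x, hx, hxne⟩ := Submodule.exists_mem_ne_zero_of_ne_bot h1
      obtain ⟨y, hy, hyne⟩ := Submodule.exists_mem_ne_zero_of_ne_bot h2
      refine ⟨x * y, ?_, ?_, mul_ne_zero hxne hyne⟩
      · have : x * y - a1 = x * y + (A0 - a1) := by rw [h0]; ring
        rw [this]; exact q₁.add_mem (q₁.mul_mem_right _ hx) hA01
      · have : x * y - a2 = x * y + (A0 - a2) := by rw [h0]; ring
        rw [this]; exact q₂.add_mem (q₂.mul_mem_left _ hy) hA02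
    · exact ⟨A0, hA01, hA02, h0⟩
  have hspanA : Ideal.span {A} ≠ 0 := by
    rw [Submodule.zero_eq_bot, Ne, Ideal.span_singleton_eq_bot]; exact hAne
  -- the finitely many "bad" maximal ideals not already handled by q₁, q₂
  set P' : Set (Ideal D) :=
    {p | p.IsMaximal ∧ Ideal.span {A} ≤ p ∧ ¬ q₁ ≤ p ∧ ¬ q₂ ≤ p} with hP'
  have hP'fin : P'.Finite := by
    haveI := UniqueFactorizationMonoid.fintypeSubtypeDvd (Ideal.span {A}) hspanA
    have hfin : {I : Ideal D | I ∣ Ideal.span {A}}.Finite := by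
      have : Finite {I : Ideal D // I ∣ Ideal.span {A}} := Finite.of_fintype _
      exact Set.finite_coe_iff.mp this
    exact hfin.subset fun p hp => Ideal.dvd_iff_le.mpr hp.2.1
  set J : Ideal D := hP'fin.toFinset.prod id with hJ
  have hJle : ∀ p ∈ P', J ≤ p := fun p hp =>
    le_trans Ideal.prod_le_inf (Finset.inf_le (hP'fin.mem_toFinset.mpr hp))
  have hJ1 : IsCoprime J q₁ := IsCoprime.prod_left fun p hp =>
    coprime_of_isMaximal_not_le (hP'fin.mem_toFinset.mp hp).1 (hP'fin.mem_toFinset.mp hp).2.2.1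
  have hJ2 : IsCoprime J q₂ := IsCoprime.prod_left fun p hp =>
    coprime_of_isMaximal_not_le (hP'fin.mem_toFinset.mp hp).1 (hP'fin.mem_toFinset.mp hp).2.2.2
  -- CRT for C, via two successive two-ideal steps
  obtain ⟨C0, hC01, hC02⟩ := crt2 hco c1 c2
  have hJ12 : IsCoprime (q₁ * q₂) J := (hJ1.symm.mul_left hJ2.symm)
  obtain ⟨C, hCC0, hCJ'⟩ := crt2 hJ12 C0 1
  have hC1 : C - c1 ∈ q₁ := by
    have heq : C - c1 = (C - C0) + (C0 - c1) := by ring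
    rw [heq]; exact q₁.add_mem (Ideal.mul_le_left hCC0) hC01
  have hC2 : C - c2 ∈ q₂ := by
    have heq : C - c2 = (C - C0) + (C0 - c2) := by ring
    rw [heq]; exact q₂.add_mem (Ideal.mul_le_right hCC0) hC02
  have hCJ : C - 1 ∈ J := hCJ'
  -- A and C generate the unit ideal
  have htop : Ideal.span {A} ⊔ Ideal.span {C} = ⊤ := by
    by_contra hne
    obtain ⟨p, hpmax, hple⟩ := Ideal.exists_le_maximal _ hne
    have hAp : A ∈ p := (Ideal.span_singleton_le_iff_mem _).mp (le_sup_left.trans hple)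
    have hCp : C ∈ p := (Ideal.span_singleton_le_iff_mem _).mp (le_sup_right.trans hple)
    have hone : (1 : D) ∈ p := by
      by_cases hq1p : q₁ ≤ p
      · have ha1p : a1 ∈ p := by
          have := p.sub_mem hAp (hq1p hA1); simpa using this
        have hc1p : c1 ∈ p := by
          have := p.sub_mem hCp (hq1p hC1); simpa using this
        rw [← hdet1]
        exact p.sub_mem (p.mul_mem_right _ ha1p) (p.mul_mem_left _ hc1p)
      · by_cases hq2p : q₂ ≤ p
        · have ha2p : a2 ∈ p := by
            have := p.sub_mem hAp (hq2p hA2); simpa using this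
          have hc2p : c2 ∈ p := by
            have := p.sub_mem hCp (hq2p hC2); simpa using this
          rw [← hdet2]
          exact p.sub_mem (p.mul_mem_right _ ha2p) (p.mul_mem_left _ hc2p)
        · have hpP' : p ∈ P' := ⟨hpmax, (Ideal.span_singleton_le_iff_mem _).mpr hAp, hq1p, hq2p⟩
          have := p.sub_mem hCp (hJle p hpP' hCJ); simpa using this
    exact hpmax.ne_top ((Ideal.eq_top_iff_one p).mpr hone)
  obtain ⟨u, v, huv⟩ : ∃ u v : D, u * A + v * C = 1 := by
    have h1mem : (1 : D) ∈ Ideal.span {A} ⊔ Ideal.span {C} := htop ▸ Submodule.mem_top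
    rw [← Ideal.span_insert, Ideal.mem_span_pair] at h1mem
    obtain ⟨u, v, huv⟩ := h1mem
    exact ⟨u, v, huv⟩
  -- consistency elements
  have hτ1 : a1 * (d1 - u) - c1 * (b1 + v) ∈ q₁ := by
    have heq : a1 * (d1 - u) - c1 * (b1 + v) = u * (A - a1) + v * (C - c1) := by
      linear_combination hdet1 - huv
    rw [heq]
    exact q₁.add_mem (q₁.mul_mem_left _ hA1) (q₁.mul_mem_left _ hC1)
  have hτ2 : a2 * (d2 - u) - c2 * (b2 + v) ∈ q₂ := by
    have heq : a2 * (d2 - u) - c2 * (b2 + v) = u * (A - a2) + v * (C - c2) := by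
      linear_combination hdet2 - huv
    rw [heq]
    exact q₂.add_mem (q₂.mul_mem_left _ hA2) (q₂.mul_mem_left _ hC2)
  set s1 : D := d1 * (b1 + v) - b1 * (d1 - u) with hs1def
  set s2 : D := d2 * (b2 + v) - b2 * (d2 - u) with hs2def
  obtain ⟨s, hs1, hs2⟩ := crt2 hco s1 s2
  refine ⟨⟨!![A, -v + s * A; C, u + s * C], by
    rw [Matrix.det_fin_two_of]; linear_combination huv⟩, ?_, ?_⟩
  · -- congruence mod q₁
    have hs1a : s1 * a1 - (b1 + v) ∈ q₁ := by
      have heq : s1 * a1 - (b1 + v) = -b1 * (a1 * (d1 - u) - c1 * (b1 + v)) := by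
        rw [hs1def]; linear_combination (b1 + v) * hdet1
      rw [heq]; exact q₁.mul_mem_left _ hτ1
    have hs1c : s1 * c1 - (d1 - u) ∈ q₁ := by
      have heq : s1 * c1 - (d1 - u) = -d1 * (a1 * (d1 - u) - c1 * (b1 + v)) := by
        rw [hs1def]; linear_combination (d1 - u) * hdet1
      rw [heq]; exact q₁.mul_mem_left _ hτ1
    have hB1 : (-v + s * A) - b1 ∈ q₁ := by
      have heq : (-v + s * A) - b1
          = (s - s1) * A + s1 * (A - a1) + (s1 * a1 - (b1 + v)) := by ring
      rw [heq]
      exact q₁.add_mem (q₁.add_mem (q₁.mul_mem_right _ hs1) (q₁.mul_mem_left _ hA1)) hs1a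
    have hD1 : (u + s * C) - d1 ∈ q₁ := by
      have heq : (u + s * C) - d1
          = (s - s1) * C + s1 * (C - c1) + (s1 * c1 - (d1 - u)) := by ring
      rw [heq]
      exact q₁.add_mem (q₁.add_mem (q₁.mul_mem_right _ hs1) (q₁.mul_mem_left _ hC1)) hs1c
    intro i j
    fin_cases i <;> fin_cases j <;> simp
    · exact hA1
    · exact hB1
    · exact hC1
    · exact hD1
  · -- congruence mod q₂
    have hs2a : s2 * a2 - (b2 + v) ∈ q₂ := by
      have heq : s2 * a2 - (b2 + v) = -b2 * (a2 * (d2 - u) - c2 * (b2 + v)) := by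
        rw [hs2def]; linear_combination (b2 + v) * hdet2
      rw [heq]; exact q₂.mul_mem_left _ hτ2
    have hs2c : s2 * c2 - (d2 - u) ∈ q₂ := by
      have heq : s2 * c2 - (d2 - u) = -d2 * (a2 * (d2 - u) - c2 * (b2 + v)) := by
        rw [hs2def]; linear_combination (d2 - u) * hdet2
      rw [heq]; exact q₂.mul_mem_left _ hτ2
    have hB2 : (-v + s * A) - b2 ∈ q₂ := by
      have heq : (-v + s * A) - b2
          = (s - s2) * A + s2 * (A - a2) + (s2 * a2 - (b2 + v)) := by ring
      rw [heq]
      exact q₂.add_mem (q₂.add_mem (q₂.mul_mem_right _ hs2) (q₂.mul_mem_left _ hA2)) hs2a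
    have hD2 : (u + s * C) - d2 ∈ q₂ := by
      have heq : (u + s * C) - d2
          = (s - s2) * C + s2 * (C - c2) + (s2 * c2 - (d2 - u)) := by ring
      rw [heq]
      exact q₂.add_mem (q₂.add_mem (q₂.mul_mem_right _ hs2) (q₂.mul_mem_left _ hC2)) hs2c
    intro i j
    fin_cases i <;> fin_cases j <;> simp
    · exact hA2
    · exact hB2
    · exact hC2
    · exact hD2

end Approx
section Split

open UniqueFactorizationMonoid

variable {D : Type*} [CommRing D] [IsDomain D] [IsDedekindDomain D]

lemma exists_coprime_split {q K₁ K₂ : Ideal D} (hq : q ≠ ⊥) (h1 : q ≤ K₁) (h2 : q ≤ K₂) :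
    ∃ q₁ q₂ : Ideal D, q₁ * q₂ = q ∧ IsCoprime q₁ q₂ ∧ K₁ * q₁ ≤ K₂ ∧ K₂ * q₂ ≤ K₁ := by
  classical
  have hq0 : q ≠ 0 := by rwa [Submodule.zero_eq_bot]
  have hK₁0 : K₁ ≠ 0 := by
    intro h; rw [h, Submodule.zero_eq_bot, le_bot_iff] at h1; exact hq h1
  have hK₂0 : K₂ ≠ 0 := by
    intro h; rw [h, Submodule.zero_eq_bot, le_bot_iff] at h2; exact hq h2
  set F := normalizedFactors q with hF
  set P : Ideal D → Prop :=
    fun p => Multiset.count p (normalizedFactors K₁) ≤ Multiset.count p (normalizedFactors K₂)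
    with hPdef
  set q₁ := (F.filter P).prod with hq₁def
  set q₂ := (F.filter (fun p => ¬ P p)).prod with hq₂def
  have hprime₁ : ∀ p ∈ F.filter P, Prime p := fun p hp =>
    prime_of_normalized_factor p (Multiset.mem_filter.mp hp).1
  have hprime₂ : ∀ p ∈ F.filter (fun p => ¬ P p), Prime p := fun p hp =>
    prime_of_normalized_factor p (Multiset.mem_filter.mp hp).1
  have hmul : q₁ * q₂ = q := by
    rw [hq₁def, hq₂def, ← Multiset.prod_add, Multiset.filter_add_not]
    exact associated_iff_eq.mp (prod_normalizedFactors hq0)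
  have hq₁0 : q₁ ≠ 0 := fun h => hq0 (by rw [← hmul, h, zero_mul])
  have hq₂0 : q₂ ≠ 0 := fun h => hq0 (by rw [← hmul, h, mul_zero])
  have hnf₁ : normalizedFactors q₁ = F.filter P := normalizedFactors_prod_of_prime hprime₁
  have hnf₂ : normalizedFactors q₂ = F.filter (fun p => ¬ P p) :=
    normalizedFactors_prod_of_prime hprime₂
  have hKF : ∀ {K : Ideal D}, K ≠ 0 → q ≤ K →
      ∀ p, Multiset.count p (normalizedFactors K) ≤ Multiset.count p F := by
    intro K hK0 hqK p
    have : normalizedFactors K ≤ F :=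
      (dvd_iff_normalizedFactors_le_normalizedFactors hK0 hq0).mp (Ideal.dvd_iff_le.mpr hqK)
    exact Multiset.le_iff_count.mp this p
  refine ⟨q₁, q₂, hmul, ?_, ?_, ?_⟩
  · -- coprime
    rw [Ideal.isCoprime_iff_sup_eq]
    by_contra hne
    obtain ⟨p, hpmax, hple⟩ := Ideal.exists_le_maximal _ hne
    have hp0 : p ≠ ⊥ := by
      intro h
      exact hq₁0 (le_bot_iff.mp (h ▸ le_sup_left.trans hple))
    have hpprime : Prime p := Ideal.prime_of_isPrime hp0 hpmax.isPrime
    have hmem₁ : p ∈ F.filter P := by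
      obtain ⟨a, ha, hpa⟩ := hpprime.exists_mem_multiset_dvd
        (Ideal.dvd_iff_le.mpr (le_sup_left.trans hple) : p ∣ q₁)
      rwa [associated_iff_eq.mp
        (hpprime.irreducible.associated_of_dvd (hprime₁ a ha).irreducible hpa)]
    have hmem₂ : p ∈ F.filter (fun p => ¬ P p) := by
      obtain ⟨a, ha, hpa⟩ := hpprime.exists_mem_multiset_dvd
        (Ideal.dvd_iff_le.mpr (le_sup_right.trans hple) : p ∣ q₂)
      rwa [associated_iff_eq.mp
        (hpprime.irreducible.associated_of_dvd (hprime₂ a ha).irreducible hpa)]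
    exact (Multiset.mem_filter.mp hmem₂).2 (Multiset.mem_filter.mp hmem₁).2
  · -- K₁ * q₁ ≤ K₂
    rw [← Ideal.dvd_iff_le]
    rw [dvd_iff_normalizedFactors_le_normalizedFactors hK₂0 (mul_ne_zero hK₁0 hq₁0),
      normalizedFactors_mul hK₁0 hq₁0, hnf₁, Multiset.le_iff_count]
    intro p
    rw [Multiset.count_add, Multiset.count_filter]
    by_cases hP : P p
    · rw [if_pos hP]
      exact (hKF hK₂0 h2 p).trans (Nat.le_add_left _ _)
    · rw [if_neg hP, add_zero]
      exact le_of_not_ge hP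
  · -- K₂ * q₂ ≤ K₁
    rw [← Ideal.dvd_iff_le]
    rw [dvd_iff_normalizedFactors_le_normalizedFactors hK₁0 (mul_ne_zero hK₂0 hq₂0),
      normalizedFactors_mul hK₂0 hq₂0, hnf₂, Multiset.le_iff_count]
    intro p
    rw [Multiset.count_add, Multiset.count_filter]
    by_cases hP : P p
    · rw [if_neg (by simpa using hP), add_zero]
      exact hP
    · rw [if_pos hP]
      exact (hKF hK₁0 h1 p).trans (Nat.le_add_left _ _)

end Split
section Main

variable {D : Type*} [CommRing D] [IsDomain D] [IsDedekindDomain D]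

lemma conj_transfer (H : Subgroup (Matrix.SpecialLinearGroup (Fin 2) D))
    {q : Ideal D} (hqH : SLmod D q ≤ H)
    {g g' : Matrix.SpecialLinearGroup (Fin 2) D} {J : Ideal D} {w : D}
    (hgg' : MatCongr J (g : Matrix (Fin 2) (Fin 2) D) (g' : Matrix (Fin 2) (Fin 2) D))
    (hwq : ∀ t ∈ J, w * t ∈ q)
    (hB : g' * Tm D w * g'⁻¹ ∈ H) : g * Tm D w * g⁻¹ ∈ H := by
  set E : Matrix (Fin 2) (Fin 2) D := !![0, 1; 0, 0] with hE
  have hTm : (↑(Tm D w) : Matrix (Fin 2) (Fin 2) D) = 1 + w • E := by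
    ext i j
    fin_cases i <;> fin_cases j <;> simp [Tm, hE]
  have hconj : ∀ k : Matrix.SpecialLinearGroup (Fin 2) D,
      (↑(k * Tm D w * k⁻¹) : Matrix (Fin 2) (Fin 2) D)
        = 1 + w • ((k : Matrix (Fin 2) (Fin 2) D) * E * (↑(k⁻¹) : Matrix (Fin 2) (Fin 2) D)) := by
    intro k
    rw [Matrix.SpecialLinearGroup.coe_mul, Matrix.SpecialLinearGroup.coe_mul, hTm]
    have hki : (k : Matrix (Fin 2) (Fin 2) D) * (↑(k⁻¹) : Matrix (Fin 2) (Fin 2) D) = 1 := by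
      rw [← Matrix.SpecialLinearGroup.coe_mul, mul_inv_cancel,
        Matrix.SpecialLinearGroup.coe_one]
    rw [Matrix.mul_add, Matrix.mul_one, Matrix.add_mul, hki, Matrix.mul_smul, Matrix.smul_mul]
  have hadj : MatCongr J (↑(g⁻¹) : Matrix (Fin 2) (Fin 2) D) (↑(g'⁻¹) : Matrix (Fin 2) (Fin 2) D) := by
    rw [Matrix.SpecialLinearGroup.coe_inv, Matrix.SpecialLinearGroup.coe_inv]
    exact hgg'.adjugate
  have hErefl : MatCongr J E E := fun i j => by simp
  have hN : MatCongr J ((g : Matrix (Fin 2) (Fin 2) D) * E * (↑(g⁻¹) : Matrix (Fin 2) (Fin 2) D))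
      ((g' : Matrix (Fin 2) (Fin 2) D) * E * (↑(g'⁻¹) : Matrix (Fin 2) (Fin 2) D)) :=
    (hgg'.mul hErefl).mul hadj
  have hmem : (g * Tm D w * g⁻¹) * (g' * Tm D w * g'⁻¹)⁻¹ ∈ SLmod D q := by
    apply mem_SLmod_of_congr
    intro i j
    rw [hconj g, hconj g']
    simp only [Matrix.add_apply, Matrix.smul_apply, smul_eq_mul]
    rw [add_sub_add_left_eq_sub, ← mul_sub]
    exact hwq _ (hN i j)
  have := H.mul_mem (hqH hmem) hB
  rwa [inv_mul_cancel_right] at this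

lemma key_lemma (H : Subgroup (Matrix.SpecialLinearGroup (Fin 2) D))
    {q : Ideal D} (hq0 : q ≠ ⊥) (hqH : SLmod D q ≤ H)
    {g₁ g₂ : Matrix.SpecialLinearGroup (Fin 2) D} {K₁ K₂ : Ideal D}
    (hq1 : q ≤ K₁) (hq2 : q ≤ K₂)
    (h₁ : ∀ x ∈ K₁, g₁ * Tm D x * g₁⁻¹ ∈ H)
    (h₂ : ∀ x ∈ K₂, g₂ * Tm D x * g₂⁻¹ ∈ H) :
    ∃ g₃, ∀ x ∈ K₁ ⊔ K₂, g₃ * Tm D x * g₃⁻¹ ∈ H := by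
  obtain ⟨q₁, q₂, hmul, hco, hK1q1, hK2q2⟩ := exists_coprime_split hq0 hq1 hq2
  have hq₁0 : q₁ ≠ ⊥ := by
    intro h; apply hq0; rw [← hmul, h]; simp
  have hq₂0 : q₂ ≠ ⊥ := by
    intro h; apply hq0; rw [← hmul, h]; simp
  obtain ⟨g₃, hg₁, hg₂⟩ := exists_SL_congr hco hq₁0 hq₂0 g₁ g₂
  refine ⟨g₃, ?_⟩
  intro x hx
  obtain ⟨i, hi, j, hj, hij⟩ := Ideal.isCoprime_iff_exists.mp hco
  obtain ⟨y, hy, z, hz, hyz⟩ := Submodule.mem_sup.mp hx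
  have hx1 : x * j ∈ K₁ := by
    rw [← hyz, add_mul]
    exact K₁.add_mem (K₁.mul_mem_right _ hy) (hK2q2 (Ideal.mul_mem_mul hz hj))
  have hx2 : x * i ∈ K₂ := by
    rw [← hyz, add_mul]
    exact K₂.add_mem (hK1q1 (Ideal.mul_mem_mul hy hi)) (K₂.mul_mem_right _ hz)
  have hw1 : ∀ t ∈ q₁, (x * j) * t ∈ q := by
    intro t ht
    have : j * t ∈ q := by
      rw [← hmul, mul_comm q₁ q₂]; exact Ideal.mul_mem_mul hj ht
    rw [mul_assoc]; exact q.mul_mem_left x this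
  have hw2 : ∀ t ∈ q₂, (x * i) * t ∈ q := by
    intro t ht
    have : i * t ∈ q := by
      rw [← hmul]; exact Ideal.mul_mem_mul hi ht
    rw [mul_assoc]; exact q.mul_mem_left x this
  have hm1 : g₃ * Tm D (x * j) * g₃⁻¹ ∈ H :=
    conj_transfer H hqH hg₁ hw1 (h₁ _ hx1)
  have hm2 : g₃ * Tm D (x * i) * g₃⁻¹ ∈ H :=
    conj_transfer H hqH hg₂ hw2 (h₂ _ hx2)
  have hxsum : x * j + x * i = x := by linear_combination x * hij
  have hgrp : g₃ * Tm D (x * j) * g₃⁻¹ * (g₃ * Tm D (x * i) * g₃⁻¹)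
      = g₃ * (Tm D (x * j) * Tm D (x * i)) * g₃⁻¹ := by group
  have := H.mul_mem hm1 hm2
  rwa [hgrp, ← Tm_add, hxsum] at this

end Main

/-- Corollary 2.8. Let `H` be a congruence subgroup of `SL₂(D)` and let
`c g` denote the cusp amplitude of `H` at `g`. Then there is `g₀` such that `c g ≤ c g₀`
for all `g`; consequently the ideal-theoretic sum of all cusp amplitudes equals `c g₀`,
and is itself a cusp amplitude of `H`. -/
theorem statement6 {D : Type*} [CommRing D] [IsDomain D] [IsDedekindDomain D]
    (H : Subgroup (Matrix.SpecialLinearGroup (Fin 2) D)) (hH : IsCongruence H)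
    (c : Matrix.SpecialLinearGroup (Fin 2) D → Ideal D)
    (hc : ∀ g, IsCuspAmplitude H g (c g)) :
    ∃ g₀ : Matrix.SpecialLinearGroup (Fin 2) D,
      (∀ g, c g ≤ c g₀) ∧ (⨆ g, c g) = c g₀ ∧ IsCuspAmplitude H g₀ (⨆ g, c g) := by
  obtain ⟨q, hq0, hqH⟩ := hH
  have hqle : ∀ g, q ≤ c g := fun g => (hc g).2 q (fun x hx =>
    hqH ((SLmod_normal q).conj_mem _ (Tm_mem_SLmod hx) g))
  have hq0' : q ≠ 0 := by rwa [Submodule.zero_eq_bot]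
  have hfin : (Set.range c).Finite := by
    haveI := UniqueFactorizationMonoid.fintypeSubtypeDvd q hq0'
    have hfi : Finite {I : Ideal D // I ∣ q} := Finite.of_fintype _
    have h2 : {I : Ideal D | I ∣ q}.Finite := Set.finite_coe_iff.mp hfi
    refine h2.subset ?_
    rintro _ ⟨g, rfl⟩
    exact Ideal.dvd_iff_le.mpr (hqle g)
  obtain ⟨I₀, hI₀mem, hI₀max⟩ :=
    hfin.exists_maximalFor id _ ⟨c 1, 1, rfl⟩
  obtain ⟨g₀, hg₀⟩ := hI₀mem
  have hmax : ∀ g, c g ≤ c g₀ := by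
    intro g
    obtain ⟨g₃, hg₃⟩ := key_lemma H hq0 hqH (hqle g) (hqle g₀) ((hc g).1) ((hc g₀).1)
    have hle : c g ⊔ c g₀ ≤ c g₃ := (hc g₃).2 _ hg₃
    have hI₀le : id I₀ ≤ id (c g₃) := by
      simp only [id]; rw [← hg₀]; exact le_sup_right.trans hle
    have heq : I₀ = c g₃ := le_antisymm hI₀le (hI₀max ⟨g₃, rfl⟩ hI₀le)
    calc c g ≤ c g₃ := le_sup_left.trans hle
      _ = I₀ := heq.symm
      _ = c g₀ := hg₀.symm
  have hsup : (⨆ g, c g) = c g₀ := le_antisymm (iSup_le hmax) (le_iSup c g₀)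
  exact ⟨g₀, hmax, hsup, hsup ▸ hc g₀⟩
end

section
/- Let D be a Dedekind domain and H a congruence subgroup of SL₂(D) with level l(H) = 𝔮. Let 𝔮_∞ = c(H, I₂) and let 𝔮₀ = c(H, g₀), where g₀ ∈ SL₂(D) is any element whose (1,1)-entry is 0 (i.e. g₀(∞) = 0 under the fractional linear action). Then 𝔮₀·𝔮_∞ ⊆ 𝔮. -/
open Matrix IsDedekindDomain

private lemma st7.crt_aux {D : Type*} [CommRing D] [IsDomain D] [IsDedekindDomain D]
    (q₀ : Ideal D) (T : Finset (HeightOneSpectrum D)) (r : HeightOneSpectrum D → D)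
    (hco : ∀ v ∈ T, ¬ q₀ ≤ v.asIdeal) :
    ∃ x ∈ q₀, ∀ v ∈ T, x - r v ∈ v.asIdeal := by
  classical
  induction T using Finset.induction_on with
  | empty => exact ⟨0, q₀.zero_mem, by simp⟩
  | @insert v₀ T hv₀ ih =>
    obtain ⟨x, hx, hxT⟩ := ih (fun v hv => hco v (Finset.mem_insert_of_mem hv))
    set J : Ideal D := q₀ * T.prod (fun v => v.asIdeal) with hJ
    have hJv : ¬ J ≤ v₀.asIdeal := by
      intro hle
      rw [hJ, v₀.isPrime.mul_le] at hle
      rcases hle with h | h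
      · exact hco v₀ (Finset.mem_insert_self _ _) h
      · rw [Ideal.IsPrime.prod_le v₀.isPrime] at h
        obtain ⟨v, hvT, hvle⟩ := h
        have : v = v₀ := by
          apply HeightOneSpectrum.ext
          exact (v.isMaximal.eq_of_le v₀.isMaximal.ne_top hvle)
        exact hv₀ (this ▸ hvT)
    have hsup : J ⊔ v₀.asIdeal = ⊤ := by
      have hlt : v₀.asIdeal < J ⊔ v₀.asIdeal := right_lt_sup.mpr hJv
      exact v₀.isMaximal.1.2 _ hlt
    have h1 : (1 : D) ∈ J ⊔ v₀.asIdeal := by rw [hsup]; exact Submodule.mem_top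
    obtain ⟨u, hu, t, ht, hut⟩ := Submodule.mem_sup.mp h1
    refine ⟨x + u * (r v₀ - x), ?_, ?_⟩
    · exact q₀.add_mem hx (Ideal.mul_mem_right _ _ (Ideal.mul_le_left hu))
    · intro v hv
      rcases Finset.mem_insert.mp hv with rfl | hvT
      · have : x + u * (r v - x) - r v = (x - r v) * t := by linear_combination (r v - x) * hut
        rw [this]
        exact Ideal.mul_mem_left _ _ ht
      · have huv : u ∈ v.asIdeal := by
          have : J ≤ v.asIdeal := by
            exact le_trans Ideal.mul_le_right (le_trans Ideal.prod_le_inf (Finset.inf_le hvT))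
          exact this hu
        have heq : x + u * (r v₀ - x) - r v = (x - r v) + u * (r v₀ - x) := by ring
        rw [heq]
        exact Submodule.add_mem _ (hxT v hvT) (Ideal.mul_mem_right _ _ huv)

private lemma st7.keyD {D : Type*} [CommRing D] [IsDomain D] [IsDedekindDomain D]
    (q' q₀ : Ideal D) (hq' : q' ≠ ⊥) (a c z : D) (hz : z ∈ q₀) :
    ∃ x' ∈ q₀, ∃ w u : D, u ∈ q' ∧ (1 - a * (c + a * x') * z) * w + u = 1 := by
  classical
  have hfin : {v : HeightOneSpectrum D | v.asIdeal ∣ q' ∧ a * z ∉ v.asIdeal}.Finite :=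
    (Ideal.finite_factors hq').subset (fun v hv => hv.1)
  set T : Finset (HeightOneSpectrum D) := hfin.toFinset with hT
  have hmemT : ∀ v, v ∈ T ↔ v.asIdeal ∣ q' ∧ a * z ∉ v.asIdeal := by
    intro v; rw [hT, Set.Finite.mem_toFinset]; rfl
  set r : HeightOneSpectrum D → D := fun v =>
    -c * (if h : ∃ y, ∃ i ∈ v.asIdeal, y * a + i = 1 then h.choose else 0) with hr
  have hco : ∀ v ∈ T, ¬ q₀ ≤ v.asIdeal := by
    intro v hv hle
    exact ((hmemT v).mp hv).2 (Ideal.mul_mem_left _ a (hle hz))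
  obtain ⟨x', hx', hx'T⟩ := st7.crt_aux q₀ T r hco
  refine ⟨x', hx', ?_⟩
  set p : D := 1 - a * (c + a * x') * z with hp
  have hsup : Ideal.span {p} ⊔ q' = ⊤ := by
    by_contra hne
    obtain ⟨M, hM, hle⟩ := Ideal.exists_le_maximal _ hne
    have hq'M : q' ≤ M := le_trans le_sup_right hle
    have hpM : p ∈ M := hle (le_sup_left (α := Ideal D) (Ideal.subset_span rfl))
    have hMbot : M ≠ ⊥ := fun h => hq' (le_bot_iff.mp (h ▸ hq'M))
    have h1M : (1 : D) ∉ M := fun h => hM.ne_top ((Ideal.eq_top_iff_one M).mpr h)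
    by_cases haz : a * z ∈ M
    · apply h1M
      have : a * (c + a * x') * z ∈ M := by
        have := Ideal.mul_mem_left M (c + a * x') haz
        convert this using 1; ring
      have h2 := M.add_mem hpM this
      convert h2 using 1; rw [hp]; ring
    · set v : HeightOneSpectrum D := ⟨M, hM.isPrime, hMbot⟩ with hv
      have hvT : v ∈ T := (hmemT v).mpr ⟨Ideal.dvd_iff_le.mpr hq'M, haz⟩
      have hinva : ∃ y, ∃ i ∈ v.asIdeal, y * a + i = 1 := by
        apply hM.exists_inv
        intro haM
        exact haz (Ideal.mul_mem_right z M haM)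
      obtain ⟨i, hiM, hyi⟩ := hinva.choose_spec
      have hbv : 1 - a * hinva.choose ∈ M := by
        have : 1 - a * hinva.choose = i := by linear_combination -hyi
        rw [this]; exact hiM
      have hrv : x' - r v ∈ M := by
        have := hx'T v hvT
        simpa [hr, dif_pos hinva] using this
      have hcx : c + a * x' ∈ M := by
        have heq : c + a * x' = c * (1 - a * hinva.choose) + a * (x' - r v) := by
          rw [hr]; simp only [dif_pos hinva]; ring
        rw [heq]
        exact M.add_mem (Ideal.mul_mem_left _ _ hbv) (Ideal.mul_mem_left _ _ hrv)
      apply h1M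
      have h2 : a * (c + a * x') * z ∈ M := by
        have := Ideal.mul_mem_left M (a * z) hcx
        convert this using 1; ring
      have h3 := M.add_mem hpM h2
      convert h3 using 1; rw [hp]; ring
  have h1 : (1 : D) ∈ Ideal.span {p} ⊔ q' := by rw [hsup]; exact Submodule.mem_top
  obtain ⟨s, hs, u, hu, hsu⟩ := Submodule.mem_sup.mp h1
  obtain ⟨w, hw⟩ := Ideal.mem_span_singleton'.mp hs
  refine ⟨w, u, hu, ?_⟩
  have : (1 - a * (c + a * x') * z) * w = s := by rw [← hp, mul_comm]; exact hw
  rw [this]; exact hsu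


private def st7.Lm (R : Type*) [CommRing R] (r : R) : Matrix.SpecialLinearGroup (Fin 2) R :=
  ⟨!![1, 0; r, 1], by simp [Matrix.det_fin_two_of]⟩

private lemma st7.Tm_add {R : Type*} [CommRing R] (r s : R) :
    Tm R (r + s) = Tm R r * Tm R s := by
  apply Subtype.ext
  show (!![1, r + s; 0, 1] : Matrix (Fin 2) (Fin 2) R) = !![1, r; 0, 1] * !![1, s; 0, 1]
  rw [Matrix.mul_fin_two]
  congr 1 <;> ring_nf

private lemma st7.mem_of_cong {R : Type*} [CommRing R] {q' : Ideal R}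
    {H : Subgroup (Matrix.SpecialLinearGroup (Fin 2) R)} (hq'H : SLmod R q' ≤ H)
    (A B : Matrix.SpecialLinearGroup (Fin 2) R) (hB : B ∈ H)
    (h : ∀ i j, (A : Matrix (Fin 2) (Fin 2) R) i j - (B : Matrix (Fin 2) (Fin 2) R) i j ∈ q') :
    A ∈ H := by
  have hmap : Matrix.SpecialLinearGroup.map (Ideal.Quotient.mk q') A
      = Matrix.SpecialLinearGroup.map (Ideal.Quotient.mk q') B := by
    apply Subtype.ext
    ext i j
    simp only [Matrix.SpecialLinearGroup.map_apply_coe, RingHom.mapMatrix_apply, Matrix.map_apply]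
    rw [Ideal.Quotient.mk_eq_mk_iff_sub_mem]
    exact h i j
  have hker : A * B⁻¹ ∈ SLmod R q' := by
    show A * B⁻¹ ∈ (Matrix.SpecialLinearGroup.map (Ideal.Quotient.mk q')).ker
    rw [MonoidHom.mem_ker, _root_.map_mul, _root_.map_inv, hmap, mul_inv_cancel]
  have : (A * B⁻¹) * B = A := by group
  rw [← this]
  exact H.mul_mem (hq'H hker) hB

private lemma st7.conj_raw {R : Type*} [CommRing R] (a b c d z : R) (hdet : a * d - b * c = 1) :
    !![a, b; c, d] * !![1, z; 0, 1] * !![d, -b; -c, a]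
      = !![1 - a * c * z, a ^ 2 * z; -(c ^ 2 * z), 1 + a * c * z] := by
  rw [Matrix.mul_fin_two, Matrix.mul_fin_two]
  ext i j
  fin_cases i <;> fin_cases j <;> simp <;>
    first
      | ring1
      | linear_combination hdet
      | linear_combination (1 + z) * hdet
      | linear_combination (1 - z) * hdet
      | linear_combination z * hdet
      | linear_combination (-z) * hdet

private lemma st7.conj_entries {R : Type*} [CommRing R]
    (S : Matrix.SpecialLinearGroup (Fin 2) R) (z : R) :
    ((S * Tm R z * S⁻¹ : Matrix.SpecialLinearGroup (Fin 2) R) : Matrix (Fin 2) (Fin 2) R)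
      = !![1 - (S : Matrix (Fin 2) (Fin 2) R) 0 0 * (S : Matrix (Fin 2) (Fin 2) R) 1 0 * z,
           (S : Matrix (Fin 2) (Fin 2) R) 0 0 ^ 2 * z;
           -((S : Matrix (Fin 2) (Fin 2) R) 1 0 ^ 2 * z),
           1 + (S : Matrix (Fin 2) (Fin 2) R) 0 0 * (S : Matrix (Fin 2) (Fin 2) R) 1 0 * z] := by
  have hdet : (S : Matrix (Fin 2) (Fin 2) R) 0 0 * (S : Matrix (Fin 2) (Fin 2) R) 1 1
      - (S : Matrix (Fin 2) (Fin 2) R) 0 1 * (S : Matrix (Fin 2) (Fin 2) R) 1 0 = 1 := by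
    have := S.2
    rwa [Matrix.det_fin_two] at this
  have hSinv : ((S⁻¹ : Matrix.SpecialLinearGroup (Fin 2) R) : Matrix (Fin 2) (Fin 2) R)
      = !![(S : Matrix (Fin 2) (Fin 2) R) 1 1, -(S : Matrix (Fin 2) (Fin 2) R) 0 1;
           -(S : Matrix (Fin 2) (Fin 2) R) 1 0, (S : Matrix (Fin 2) (Fin 2) R) 0 0] := by
    rw [Matrix.SpecialLinearGroup.SL2_inv_expl]
    rfl
  rw [Matrix.SpecialLinearGroup.coe_mul, Matrix.SpecialLinearGroup.coe_mul, hSinv]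
  nth_rewrite 1 [Matrix.eta_fin_two (S : Matrix (Fin 2) (Fin 2) R)]
  show _ * (!![1, z; 0, 1]) * _ = _
  exact st7.conj_raw _ _ _ _ z hdet

private lemma st7.g0_raw {R : Type*} [CommRing R] (b c d r : R) (hbc : b * c = -1) :
    !![(0 : R), b; c, d] * !![1, -(b ^ 2 * r); 0, 1] * !![d, -b; -c, 0] = !![1, 0; r, 1] := by
  rw [Matrix.mul_fin_two, Matrix.mul_fin_two]
  ext i j
  fin_cases i <;> fin_cases j <;> simp <;>
    first
      | ring1
      | linear_combination (-1 : R) * hbc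
      | linear_combination hbc
      | linear_combination (- d) * hbc
      | linear_combination d * hbc
      | linear_combination (r - r * b * c) * hbc
      | linear_combination (r * b * c - r) * hbc
      | linear_combination (r + r * b * c) * hbc

private lemma st7.g0_conj {R : Type*} [CommRing R] (g₀ : Matrix.SpecialLinearGroup (Fin 2) R)
    (hg₀ : (g₀ : Matrix (Fin 2) (Fin 2) R) 0 0 = 0) (r : R) :
    g₀ * Tm R (-((g₀ : Matrix (Fin 2) (Fin 2) R) 0 1 ^ 2 * r)) * g₀⁻¹ = st7.Lm R r := by
  have hdet : (g₀ : Matrix (Fin 2) (Fin 2) R) 0 0 * (g₀ : Matrix (Fin 2) (Fin 2) R) 1 1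
      - (g₀ : Matrix (Fin 2) (Fin 2) R) 0 1 * (g₀ : Matrix (Fin 2) (Fin 2) R) 1 0 = 1 := by
    have := g₀.2; rwa [Matrix.det_fin_two] at this
  have hbc : (g₀ : Matrix (Fin 2) (Fin 2) R) 0 1 * (g₀ : Matrix (Fin 2) (Fin 2) R) 1 0 = -1 := by
    rw [hg₀] at hdet; linear_combination -hdet
  apply Subtype.ext
  have hSinv : ((g₀⁻¹ : Matrix.SpecialLinearGroup (Fin 2) R) : Matrix (Fin 2) (Fin 2) R)
      = !![(g₀ : Matrix (Fin 2) (Fin 2) R) 1 1, -(g₀ : Matrix (Fin 2) (Fin 2) R) 0 1;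
           -(g₀ : Matrix (Fin 2) (Fin 2) R) 1 0, 0] := by
    rw [Matrix.SpecialLinearGroup.SL2_inv_expl]
    show (!![(g₀ : Matrix (Fin 2) (Fin 2) R) 1 1, -(g₀ : Matrix (Fin 2) (Fin 2) R) 0 1;
           -(g₀ : Matrix (Fin 2) (Fin 2) R) 1 0, (g₀ : Matrix (Fin 2) (Fin 2) R) 0 0]
           : Matrix (Fin 2) (Fin 2) R) = _
    rw [hg₀]
  rw [Matrix.SpecialLinearGroup.coe_mul, Matrix.SpecialLinearGroup.coe_mul, hSinv]
  nth_rewrite 1 [Matrix.eta_fin_two (g₀ : Matrix (Fin 2) (Fin 2) R)]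
  rw [hg₀]
  exact st7.g0_raw _ _ _ _ hbc

private lemma st7.Wraw {R : Type*} [CommRing R] (a c1 x y w : R) :
    (!![1, 0; -(c1*c1*(x*y)*w), 1] : Matrix (Fin 2) (Fin 2) R) *
      !![1, -(y*(1 - a*c1*(x*y))); 0, 1] * !![1, 0; a*c1*x*w, 1] * !![1, y; 0, 1] *
      !![1, 0; -(a*c1*x), 1] * !![1, a*a*(x*y)*w; 0, 1]
    = !![1 - a*c1*x*y*w - a*a*c1*c1*x*x*y*y + 2*a*a*c1*c1*x*x*y*y*w - a*a*a*c1*c1*c1*x*x*x*y*y*y*w,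
         a*c1*x*y*y - a*c1*x*y*y*w + a*a*x*y*w + a*a*c1*c1*x*x*y*y*y*w - a*a*a*c1*x*x*y*y*w*w - a*a*a*a*c1*c1*x*x*x*y*y*y*w + 2*a*a*a*a*c1*c1*x*x*x*y*y*y*w*w - a*a*a*a*a*c1*c1*c1*x*x*x*x*y*y*y*y*w*w;
         -c1*c1*x*y*w - a*c1*x + a*c1*x*w + a*c1*c1*c1*x*x*y*y*w*w - a*a*c1*c1*x*x*y*w + a*a*c1*c1*c1*c1*x*x*x*y*y*y*w - 2*a*a*c1*c1*c1*c1*x*x*x*y*y*y*w*w + a*a*a*c1*c1*c1*c1*c1*x*x*x*x*y*y*y*y*w*w,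
         1 + a*c1*x*y*w - a*c1*c1*c1*x*x*y*y*y*w + a*c1*c1*c1*x*x*y*y*y*w*w - a*a*c1*c1*x*x*y*y*w*w - a*a*c1*c1*c1*c1*x*x*x*y*y*y*y*w*w - a*a*a*c1*x*x*y*w + a*a*a*c1*x*x*y*w*w + a*a*a*c1*c1*c1*x*x*x*y*y*y*w*w*w - a*a*a*a*c1*c1*x*x*x*y*y*w*w + a*a*a*a*c1*c1*c1*c1*x*x*x*x*y*y*y*y*w*w - 2*a*a*a*a*c1*c1*c1*c1*x*x*x*x*y*y*y*y*w*w*w + a*a*a*a*a*c1*c1*c1*c1*c1*x*x*x*x*x*y*y*y*y*y*w*w*w] := by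
  rw [Matrix.mul_fin_two, Matrix.mul_fin_two, Matrix.mul_fin_two, Matrix.mul_fin_two,
    Matrix.mul_fin_two]
  ext i j
  fin_cases i <;> fin_cases j <;> simp <;> ring

/-- Lemma 2.9. Let `H` be a congruence subgroup of `SL₂(D)` of level `q`,
let `q∞ = c(H, I₂)` and `q₀ = c(H, g₀)` where the `(1,1)`-entry of `g₀` is `0`
(so that `g₀(∞) = 0`). Then `q₀ · q∞ ⊆ q`. -/
theorem statement7 {D : Type*} [CommRing D] [IsDomain D] [IsDedekindDomain D]
    (H : Subgroup (Matrix.SpecialLinearGroup (Fin 2) D)) (hH : IsCongruence H)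
    (q : Ideal D) (hq : IsLevel H q)
    (qinf : Ideal D) (hinf : IsCuspAmplitude H 1 qinf)
    (g₀ : Matrix.SpecialLinearGroup (Fin 2) D) (hg₀ : (g₀ : Matrix (Fin 2) (Fin 2) D) 0 0 = 0)
    (q₀ : Ideal D) (h₀ : IsCuspAmplitude H g₀ q₀) :
    q₀ * qinf ≤ q := by
  obtain ⟨q', hq'0, hq'H⟩ := hH
  have hTmem : ∀ t ∈ qinf, Tm D t ∈ H := by
    intro t ht
    have := hinf.1 t ht
    simpa using this
  have hLmem : ∀ t ∈ q₀, st7.Lm D t ∈ H := by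
    intro t ht
    rw [← st7.g0_conj g₀ hg₀ t]
    exact h₀.1 _ (neg_mem (Ideal.mul_mem_left _ _ ht))
  refine hq.2 _ ?_
  intro rr hrr
  show ∀ gg : Matrix.SpecialLinearGroup (Fin 2) D, gg * Tm D rr * gg⁻¹ ∈ H
  intro gg
  refine Submodule.mul_induction_on hrr ?_ ?_
  swap
  · intro r1 r2 h1 h2
    rw [st7.Tm_add]
    have heq : gg * (Tm D r1 * Tm D r2) * gg⁻¹ = (gg * Tm D r1 * gg⁻¹) * (gg * Tm D r2 * gg⁻¹) := by
      group
    rw [heq]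
    exact H.mul_mem h1 h2
  intro x hx y hy
  obtain ⟨A, B2, Cg, D2, hgg⟩ : ∃ a b c d, (gg : Matrix (Fin 2) (Fin 2) D) = !![a, b; c, d] :=
    ⟨_, _, _, _, Matrix.eta_fin_two _⟩
  have hzq₀ : x * y ∈ q₀ := Ideal.mul_mem_right _ _ hx
  have hzqinf : x * y ∈ qinf := Ideal.mul_mem_left _ _ hy
  obtain ⟨x', hx'q₀, w, u, huq', hwu⟩ := st7.keyD q' q₀ hq'0 A Cg (x * y) hzq₀
  set C1 : D := x' * A + Cg with hC1
  set S : Matrix.SpecialLinearGroup (Fin 2) D := st7.Lm D x' * gg with hS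
  suffices hN : S * Tm D (x * y) * S⁻¹ ∈ H by
    have hL := hLmem x' hx'q₀
    have heq : gg * Tm D (x * y) * gg⁻¹
        = (st7.Lm D x')⁻¹ * (S * Tm D (x * y) * S⁻¹) * (st7.Lm D x') := by
      rw [hS]; group
    rw [heq]
    exact H.mul_mem (H.mul_mem (H.inv_mem hL) hN) hL
  have hScoe : (S : Matrix (Fin 2) (Fin 2) D) = !![A, B2; x' * A + Cg, x' * B2 + D2] := by
    rw [hS, Matrix.SpecialLinearGroup.coe_mul, hgg]
    show (!![1, 0; x', 1] : Matrix (Fin 2) (Fin 2) D) * _ = _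
    rw [Matrix.mul_fin_two]
    ext i j
    fin_cases i <;> fin_cases j <;> simp <;> ring
  have hS00 : (S : Matrix (Fin 2) (Fin 2) D) 0 0 = A := by rw [hScoe]; simp
  have hS10 : (S : Matrix (Fin 2) (Fin 2) D) 1 0 = C1 := by rw [hScoe, hC1]; simp
  have hu' : 1 - (1 - A * C1 * (x * y)) * w ∈ q' := by
    have heq : 1 - (1 - A * C1 * (x * y)) * w = u := by
      rw [hC1]; linear_combination -hwu
    rw [heq]; exact huq'
  have hNcoe : ((S * Tm D (x * y) * S⁻¹ : Matrix.SpecialLinearGroup (Fin 2) D)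
        : Matrix (Fin 2) (Fin 2) D)
      = !![1 - A * C1 * (x * y), A ^ 2 * (x * y);
           -(C1 ^ 2 * (x * y)), 1 + A * C1 * (x * y)] := by
    rw [st7.conj_entries S (x * y), hS00, hS10]
  set W : Matrix.SpecialLinearGroup (Fin 2) D :=
    st7.Lm D (-(C1 * C1 * (x * y) * w)) * Tm D (-(y * (1 - A * C1 * (x * y))))
      * st7.Lm D (A * C1 * x * w) * Tm D y * st7.Lm D (-(A * C1 * x))
      * Tm D (A * A * (x * y) * w) with hW
  have hWH : W ∈ H := by
    rw [hW]
    refine H.mul_mem (H.mul_mem (H.mul_mem (H.mul_mem (H.mul_mem ?_ ?_) ?_) ?_) ?_) ?_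
    · exact hLmem _ (neg_mem (Ideal.mul_mem_right _ _ (Ideal.mul_mem_left _ _ hzq₀)))
    · exact hTmem _ (neg_mem (Ideal.mul_mem_right _ _ hy))
    · exact hLmem _ (Ideal.mul_mem_right _ _ (Ideal.mul_mem_left _ _ hx))
    · exact hTmem _ hy
    · exact hLmem _ (neg_mem (Ideal.mul_mem_left _ _ hx))
    · exact hTmem _ (Ideal.mul_mem_right _ _ (Ideal.mul_mem_left _ _ hzqinf))
  have hWcoe : (W : Matrix (Fin 2) (Fin 2) D)
      = !![1 - A*C1*x*y*w - A*A*C1*C1*x*x*y*y + 2*A*A*C1*C1*x*x*y*y*w - A*A*A*C1*C1*C1*x*x*x*y*y*y*w,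
           A*C1*x*y*y - A*C1*x*y*y*w + A*A*x*y*w + A*A*C1*C1*x*x*y*y*y*w - A*A*A*C1*x*x*y*y*w*w - A*A*A*A*C1*C1*x*x*x*y*y*y*w + 2*A*A*A*A*C1*C1*x*x*x*y*y*y*w*w - A*A*A*A*A*C1*C1*C1*x*x*x*x*y*y*y*y*w*w;
           -C1*C1*x*y*w - A*C1*x + A*C1*x*w + A*C1*C1*C1*x*x*y*y*w*w - A*A*C1*C1*x*x*y*w + A*A*C1*C1*C1*C1*x*x*x*y*y*y*w - 2*A*A*C1*C1*C1*C1*x*x*x*y*y*y*w*w + A*A*A*C1*C1*C1*C1*C1*x*x*x*x*y*y*y*y*w*w,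
           1 + A*C1*x*y*w - A*C1*C1*C1*x*x*y*y*y*w + A*C1*C1*C1*x*x*y*y*y*w*w - A*A*C1*C1*x*x*y*y*w*w - A*A*C1*C1*C1*C1*x*x*x*y*y*y*y*w*w - A*A*A*C1*x*x*y*w + A*A*A*C1*x*x*y*w*w + A*A*A*C1*C1*C1*x*x*x*y*y*y*w*w*w - A*A*A*A*C1*C1*x*x*x*y*y*w*w + A*A*A*A*C1*C1*C1*C1*x*x*x*x*y*y*y*y*w*w - 2*A*A*A*A*C1*C1*C1*C1*x*x*x*x*y*y*y*y*w*w*w + A*A*A*A*A*C1*C1*C1*C1*C1*x*x*x*x*x*y*y*y*y*y*w*w*w] := by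
    rw [hW]
    rw [Matrix.SpecialLinearGroup.coe_mul, Matrix.SpecialLinearGroup.coe_mul,
      Matrix.SpecialLinearGroup.coe_mul, Matrix.SpecialLinearGroup.coe_mul,
      Matrix.SpecialLinearGroup.coe_mul]
    exact st7.Wraw A C1 x y w
  apply st7.mem_of_cong hq'H _ W hWH
  intro i j
  rw [hNcoe, hWcoe]
  have hK : ∀ KK : D, KK * (1 - (1 - A * C1 * (x * y)) * w) ∈ q' :=
    fun KK => Ideal.mul_mem_left _ _ hu'
  fin_cases i <;> fin_cases j <;> simp
  · convert hK (-A*C1*x*y + A*A*C1*C1*x*x*y*y) using 1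
    ring
  · convert hK (-A*C1*x*y*y + A*A*x*y - A*A*A*C1*x*x*y*y*w + A*A*A*A*C1*C1*x*x*x*y*y*y*w) using 1
    ring
  · convert hK (-C1*C1*x*y + A*C1*x + A*C1*C1*C1*x*x*y*y*w - A*A*C1*C1*C1*C1*x*x*x*y*y*y*w) using 1
    ring
  · convert hK (A*C1*x*y + A*C1*C1*C1*x*x*y*y*y*w - A*A*C1*C1*x*x*y*y*w + A*A*A*C1*x*x*y*w + A*A*A*C1*C1*C1*x*x*x*y*y*y*w*w - A*A*A*A*C1*C1*C1*C1*x*x*x*x*y*y*y*y*w*w) using 1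
    ring
end

section
/- Let D be a Dedekind domain, G = SL₂(D), B the subgroup of upper triangular matrices in G, and U = {T(r) : r ∈ D}. Let H be a subgroup of finite index n in G, and let g₁, …, g_t ∈ G be a complete set of representatives for the double cosets H\G/B (i.e. the double cosets H·gᵢ·B are pairwise disjoint and their union is G). For g ∈ G let b(H,g) = {b ∈ D : g·T(b)·g⁻¹ ∈ H}, regarded as an additive subgroup of D, and let m(H,g) denote the index in B of the subgroup U·(g⁻¹Hg ∩ B) of B generated by U and g⁻¹Hg ∩ B. Then n = Σ_{i=1}^{t} m(H,gᵢ)·[D : b(H,gᵢ)], where [D : b(H,gᵢ)] is the index of the additive subgroup b(H,gᵢ) in D. -/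
open Matrix

theorem Tm_zero (R : Type*) [CommRing R] : Tm R 0 = 1 := by
  apply Subtype.ext
  ext i j
  fin_cases i <;> fin_cases j <;> simp [Tm, Matrix.one_fin_two]

theorem Tm_mul {R : Type*} [CommRing R] (a b : R) : Tm R a * Tm R b = Tm R (a + b) := by
  apply Subtype.ext
  rw [Matrix.SpecialLinearGroup.coe_mul]
  ext i j
  fin_cases i <;> fin_cases j <;>
    simp [Tm, Matrix.SpecialLinearGroup.coe_mul, Matrix.mul_apply, Fin.sum_univ_two] <;> ring

theorem Tm_inv {R : Type*} [CommRing R] (a : R) : (Tm R a)⁻¹ = Tm R (-a) :=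
  inv_eq_of_mul_eq_one_right (by rw [Tm_mul, add_neg_cancel, Tm_zero])

/-- The BorelSub subgroup `B` of upper triangular matrices in `SL₂(R)`. -/
def BorelSub (R : Type*) [CommRing R] : Subgroup (Matrix.SpecialLinearGroup (Fin 2) R) where
  carrier := {g | (g : Matrix (Fin 2) (Fin 2) R) 1 0 = 0}
  one_mem' := by
    show ((1 : Matrix.SpecialLinearGroup (Fin 2) R) : Matrix (Fin 2) (Fin 2) R) 1 0 = 0
    simp
  mul_mem' := by
    intro a b ha hb
    simp only [Set.mem_setOf_eq] at ha hb ⊢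
    rw [Matrix.SpecialLinearGroup.coe_mul, Matrix.mul_apply]
    simp [Fin.sum_univ_two, ha, hb]
  inv_mem' := by
    intro a ha
    simp only [Set.mem_setOf_eq] at ha ⊢
    rw [Matrix.SpecialLinearGroup.SL2_inv_expl a]
    simp [ha]

/-- The subgroup `U = {T(r) : r ∈ R}` of translations in `SL₂(R)`. -/
def Ugrp (R : Type*) [CommRing R] : Subgroup (Matrix.SpecialLinearGroup (Fin 2) R) where
  carrier := {g | ∃ r : R, g = Tm R r}
  one_mem' := ⟨0, (Tm_zero R).symm⟩
  mul_mem' := by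
    rintro a b ⟨r, rfl⟩ ⟨s, rfl⟩
    exact ⟨r + s, Tm_mul r s⟩
  inv_mem' := by
    rintro a ⟨r, rfl⟩
    exact ⟨-r, Tm_inv r⟩

/-- The quasi-amplitude `b(H,g) = {x : g · T(x) · g⁻¹ ∈ H}` as an additive subgroup
of `R`. -/
def qAmp {R : Type*} [CommRing R] (H : Subgroup (Matrix.SpecialLinearGroup (Fin 2) R))
    (g : Matrix.SpecialLinearGroup (Fin 2) R) : AddSubgroup R where
  carrier := {x : R | g * Tm R x * g⁻¹ ∈ H}
  zero_mem' := by
    show g * Tm R 0 * g⁻¹ ∈ H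
    rw [Tm_zero, mul_one, mul_inv_cancel]
    exact H.one_mem
  add_mem' := by
    intro a b ha hb
    show g * Tm R (a + b) * g⁻¹ ∈ H
    have h := H.mul_mem ha hb
    rw [← Tm_mul]
    convert h using 1
    group
  neg_mem' := by
    intro a ha
    show g * Tm R (-a) * g⁻¹ ∈ H
    have h := H.inv_mem ha
    rw [← Tm_inv]
    convert h using 1
    group


section AuxLemmas

open Subgroup Pointwise

lemma aux_mem_conj_map {G : Type*} [Group G] (H : Subgroup G) (a x : G) :
    x ∈ H.map (MulAut.conj a⁻¹).toMonoidHom ↔ a * x * a⁻¹ ∈ H := by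
  simp only [Subgroup.mem_map, MulEquiv.coe_toMonoidHom, MulAut.conj_apply]
  constructor
  · rintro ⟨y, hy, rfl⟩
    convert hy using 1
    group
  · intro h
    exact ⟨a * x * a⁻¹, h, by group⟩

lemma aux_card_sigma {ι : Type*} [Fintype ι] (f : ι → Type*) [∀ i, Finite (f i)] :
    Nat.card ((i : ι) × f i) = ∑ i, Nat.card (f i) := by
  letI := fun i => Fintype.ofFinite (f i)
  simp [Nat.card_eq_fintype_card, Fintype.card_sigma]

lemma aux_second_iso {G : Type*} [Group G] (N K : Subgroup G) [hN : N.Normal] :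
    K.relIndex (N ⊔ K) = K.relIndex N := by
  have key : ∀ (a b : ↥N), QuotientGroup.leftRel (K.subgroupOf N) a b →
      QuotientGroup.leftRel (K.subgroupOf (N ⊔ K))
        (Subgroup.inclusion le_sup_left a) (Subgroup.inclusion le_sup_left b) := by
    intro a b h
    rw [QuotientGroup.leftRel_apply] at h ⊢
    rwa [Subgroup.mem_subgroupOf] at h ⊢
  let f : (↥N ⧸ K.subgroupOf N) → (↥(N ⊔ K) ⧸ K.subgroupOf (N ⊔ K)) :=
    Quotient.map' (Subgroup.inclusion le_sup_left) key
  have hinj : Function.Injective f := by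
    intro x y
    refine Quotient.inductionOn₂' x y ?_
    intro a b h
    refine Quotient.sound' ?_
    have := Quotient.exact' h
    rw [QuotientGroup.leftRel_apply, Subgroup.mem_subgroupOf] at this ⊢
    exact this
  have hsurj : Function.Surjective f := by
    intro x
    refine Quotient.inductionOn' x ?_
    intro z
    have hz : (z : G) ∈ ((N : Set G) * (K : Set G)) := by
      rw [← Subgroup.normal_mul]; exact z.2
    obtain ⟨u, hu, k, hk, huk⟩ := hz
    refine ⟨Quotient.mk'' ⟨u, hu⟩, ?_⟩
    show Quotient.mk'' _ = _
    refine Quotient.sound' ?_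
    rw [QuotientGroup.leftRel_apply, Subgroup.mem_subgroupOf]
    show (u : G)⁻¹ * (z : G) ∈ K
    rw [← huk]
    simpa using hk
  rw [Subgroup.relIndex, Subgroup.relIndex, Subgroup.index, Subgroup.index]
  exact (Nat.card_congr (Equiv.ofBijective f ⟨hinj, hsurj⟩)).symm

lemma aux_doset_index {G : Type*} [Group G] (H B : Subgroup G) (hH : H.index ≠ 0)
    {t : ℕ} (g : Fin t → G)
    (hdisj : ∀ i j : Fin t, i ≠ j →
      Disjoint (DoubleCoset.doubleCoset (g i) (H : Set G) B) (DoubleCoset.doubleCoset (g j) (H : Set G) B))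
    (hcover : ∀ x : G, ∃ i, x ∈ DoubleCoset.doubleCoset (g i) (H : Set G) B) :
    H.index = ∑ i : Fin t,
      (H.map (MulAut.conj (g i)⁻¹).toMonoidHom ⊓ B).relIndex B := by
  set K : Fin t → Subgroup ↥B :=
    fun i => (H.map (MulAut.conj (g i)⁻¹).toMonoidHom ⊓ B).subgroupOf B with hK
  have memK : ∀ (i : Fin t) (b : ↥B), b ∈ K i ↔ g i * (b : G) * (g i)⁻¹ ∈ H := by
    intro i b
    rw [hK, Subgroup.mem_subgroupOf, Subgroup.mem_inf, aux_mem_conj_map]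
    exact ⟨fun h => h.1, fun h => ⟨h, b.2⟩⟩
  have sound : ∀ (i : Fin t) (a b : ↥B), QuotientGroup.rightRel (K i) a b →
      QuotientGroup.rightRel H (g i * (a : G)) (g i * (b : G)) := by
    intro i a b h
    rw [QuotientGroup.rightRel_apply] at h ⊢
    rw [memK] at h
    have : g i * (b : G) * (g i * (a : G))⁻¹ = g i * ((b * a⁻¹ : ↥B) : G) * (g i)⁻¹ := by
      push_cast; group
    rw [this]
    exact h
  let F : ((i : Fin t) × Quotient (QuotientGroup.rightRel (K i))) →
      Quotient (QuotientGroup.rightRel H) :=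
    fun p => Quotient.map' (fun b : ↥B => g p.1 * (b : G)) (sound p.1) p.2
  have hFinj : Function.Injective F := by
    rintro ⟨i, x⟩ ⟨j, y⟩
    induction x using Quotient.inductionOn' with | h a => ?_
    induction y using Quotient.inductionOn' with | h b => ?_
    intro h
    have hrel := Quotient.exact' h
    rw [QuotientGroup.rightRel_apply] at hrel
    have hij : i = j := by
      by_contra hne
      have hmem : g j ∈ DoubleCoset.doubleCoset (g i) (H : Set G) B := by
        rw [DoubleCoset.mem_doubleCoset]
        refine ⟨(g j * (b : G)) * (g i * (a : G))⁻¹, hrel,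
          ((a : G) * (b : G)⁻¹), mul_mem a.2 (inv_mem b.2), by group⟩
      exact Set.disjoint_left.mp (hdisj i j hne) hmem (DoubleCoset.mem_doubleCoset_self H B (g j))
    subst hij
    have hab : Quotient.mk'' a = (Quotient.mk'' b :
        Quotient (QuotientGroup.rightRel (K i))) := by
      refine Quotient.sound' ?_
      rw [QuotientGroup.rightRel_apply, memK]
      have : g i * ((b * a⁻¹ : ↥B) : G) * (g i)⁻¹
          = g i * (b : G) * (g i * (a : G))⁻¹ := by
        push_cast; group
      rw [this]
      exact hrel
    rw [hab]
  have hFsurj : Function.Surjective F := by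
    intro x
    induction x using Quotient.inductionOn' with | h z => ?_
    obtain ⟨i, hz⟩ := hcover z
    rw [DoubleCoset.mem_doubleCoset] at hz
    obtain ⟨h, hh, b, hb, rfl⟩ := hz
    refine ⟨⟨i, Quotient.mk'' ⟨b, hb⟩⟩, ?_⟩
    refine Quotient.sound' ?_
    rw [QuotientGroup.rightRel_apply]
    have : h * g i * b * (g i * ((⟨b, hb⟩ : ↥B) : G))⁻¹ = h := by
      push_cast; group
    rw [this]
    exact hh
  have e2 : Nat.card ((i : Fin t) × Quotient (QuotientGroup.rightRel (K i)))
      = Nat.card (Quotient (QuotientGroup.rightRel H)) :=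
    Nat.card_congr (Equiv.ofBijective F ⟨hFinj, hFsurj⟩)
  have e1 : H.index = Nat.card (Quotient (QuotientGroup.rightRel H)) := by
    rw [Subgroup.index]
    exact (Nat.card_congr (QuotientGroup.quotientRightRelEquivQuotientLeftRel H)).symm
  have hfin : Finite (Quotient (QuotientGroup.rightRel H)) := by
    apply Nat.finite_of_card_ne_zero
    rw [← e1]
    exact hH
  have hfinS : Finite ((i : Fin t) × Quotient (QuotientGroup.rightRel (K i))) :=
    Finite.of_equiv _ (Equiv.ofBijective F ⟨hFinj, hFsurj⟩).symm
  haveI : ∀ i, Finite (Quotient (QuotientGroup.rightRel (K i))) := fun i =>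
    Finite.of_injective
      (Sigma.mk i (β := fun j => Quotient (QuotientGroup.rightRel (K j))))
      sigma_mk_injective
  rw [e1, ← e2, aux_card_sigma]
  refine Finset.sum_congr rfl ?_
  intro i _
  rw [Subgroup.relIndex, Subgroup.index]
  exact Nat.card_congr (QuotientGroup.quotientRightRelEquivQuotientLeftRel (K i))

end AuxLemmas

section SL2Aux

open Subgroup

lemma aux_U_le_B (R : Type*) [CommRing R] : Ugrp R ≤ BorelSub R := by
  rintro x ⟨r, rfl⟩
  show ((Tm R r : Matrix.SpecialLinearGroup (Fin 2) R) : Matrix (Fin 2) (Fin 2) R) 1 0 = 0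
  simp [Tm]

lemma aux_conj_Tm {R : Type*} [CommRing R] (b : Matrix.SpecialLinearGroup (Fin 2) R)
    (hb : b ∈ BorelSub R) (r : R) :
    b * Tm R r * b⁻¹ ∈ Ugrp R := by
  have hdet : (b : Matrix (Fin 2) (Fin 2) R) 0 0 * (b : Matrix (Fin 2) (Fin 2) R) 1 1 = 1 := by
    have h := b.2
    rw [Matrix.det_fin_two] at h
    have hb0 : (b : Matrix (Fin 2) (Fin 2) R) 1 0 = 0 := hb
    rw [hb0] at h
    linear_combination h
  refine ⟨(b : Matrix (Fin 2) (Fin 2) R) 0 0 ^ 2 * r, ?_⟩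
  have key : b * Tm R r = Tm R ((b : Matrix (Fin 2) (Fin 2) R) 0 0 ^ 2 * r) * b := by
    apply Subtype.ext
    rw [Matrix.SpecialLinearGroup.coe_mul, Matrix.SpecialLinearGroup.coe_mul]
    ext i j
    have hb0 : (b : Matrix (Fin 2) (Fin 2) R) 1 0 = 0 := hb
    fin_cases i <;> fin_cases j <;>
      simp [Tm, Matrix.SpecialLinearGroup.coe_mul, Matrix.mul_apply, Fin.sum_univ_two, hb0] <;>
      linear_combination (-((b : Matrix (Fin 2) (Fin 2) R) 0 0 * r)) * hdet
  rw [key, mul_assoc, mul_inv_cancel, mul_one]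

instance aux_U_normal (R : Type*) [CommRing R] :
    ((Ugrp R).subgroupOf (BorelSub R)).Normal := by
  constructor
  intro u hu b
  rw [Subgroup.mem_subgroupOf] at hu ⊢
  obtain ⟨r, hr⟩ := hu
  have : ((b * u * b⁻¹ : ↥(BorelSub R)) : Matrix.SpecialLinearGroup (Fin 2) R)
      = (b : Matrix.SpecialLinearGroup (Fin 2) R) * u *
        (b : Matrix.SpecialLinearGroup (Fin 2) R)⁻¹ := by
    push_cast
    rfl
  rw [this, hr]
  exact aux_conj_Tm (b : Matrix.SpecialLinearGroup (Fin 2) R) b.2 r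

lemma aux_qAmp {D : Type*} [CommRing D] (H : Subgroup (Matrix.SpecialLinearGroup (Fin 2) D))
    (g : Matrix.SpecialLinearGroup (Fin 2) D) :
    (H.map (MulAut.conj g⁻¹).toMonoidHom ⊓ BorelSub D).relIndex (Ugrp D)
      = (qAmp H g).index := by
  set K := H.map (MulAut.conj g⁻¹).toMonoidHom ⊓ BorelSub D with hKdef
  have memT : ∀ x : D, Tm D x ∈ K ↔ x ∈ qAmp H g := by
    intro x
    rw [hKdef, Subgroup.mem_inf, aux_mem_conj_map]
    exact ⟨fun h => h.1, fun h => ⟨h, aux_U_le_B D ⟨x, rfl⟩⟩⟩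
  let u : D → ↥(Ugrp D) := fun x => ⟨Tm D x, ⟨x, rfl⟩⟩
  have coe_u : ∀ a b : D, (((u a)⁻¹ * u b : ↥(Ugrp D)) :
      Matrix.SpecialLinearGroup (Fin 2) D) = Tm D (-a + b) := by
    intro a b
    push_cast
    show (Tm D a)⁻¹ * Tm D b = Tm D (-a + b)
    rw [Tm_inv, Tm_mul]
  have sound : ∀ a b : D, QuotientAddGroup.leftRel (qAmp H g) a b →
      QuotientGroup.leftRel (K.subgroupOf (Ugrp D)) (u a) (u b) := by
    intro a b h
    rw [QuotientAddGroup.leftRel_apply] at h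
    rw [QuotientGroup.leftRel_apply, Subgroup.mem_subgroupOf, coe_u, memT]
    exact h
  let f : (D ⧸ qAmp H g) → (↥(Ugrp D) ⧸ K.subgroupOf (Ugrp D)) :=
    Quotient.map' u sound
  have hinj : Function.Injective f := by
    intro x y
    refine Quotient.inductionOn₂' x y ?_
    intro a b h
    refine Quotient.sound' ?_
    have := Quotient.exact' h
    rw [QuotientGroup.leftRel_apply, Subgroup.mem_subgroupOf, coe_u, memT] at this
    rwa [QuotientAddGroup.leftRel_apply]
  have hsurj : Function.Surjective f := by
    intro x
    refine Quotient.inductionOn' x ?_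
    intro z
    obtain ⟨r, hr⟩ := z.2
    refine ⟨Quotient.mk'' r, ?_⟩
    show Quotient.mk'' (u r) = _
    rw [show u r = z from Subtype.ext hr.symm]
  rw [Subgroup.relIndex, Subgroup.index, AddSubgroup.index]
  exact (Nat.card_congr (Equiv.ofBijective f ⟨hinj, hsurj⟩)).symm

end SL2Aux

/-- Theorem 3.1, the cusp-split formula. Let `H ≤ SL₂(D)` have finite
index `n`, and let `g₁, …, g_t` be a complete set of representatives of the double cosets
`H\SL₂(D)/B`, where `B` is the BorelSub subgroup. Then
`n = ∑ᵢ m(H,gᵢ) · [D : b(H,gᵢ)]`, where `m(H,g)` is the index in `B` of the subgroup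
`U·(g⁻¹Hg ∩ B)` generated by `U` and `g⁻¹Hg ∩ B`, and `[D : b(H,gᵢ)]` is the index of the
quasi-amplitude as an additive subgroup of `D`. -/
theorem statement9 {D : Type*} [CommRing D] [IsDomain D] [IsDedekindDomain D]
    (H : Subgroup (Matrix.SpecialLinearGroup (Fin 2) D))
    (n : ℕ) (hn : H.index = n) (hn0 : n ≠ 0)
    (t : ℕ) (g : Fin t → Matrix.SpecialLinearGroup (Fin 2) D)
    (hdisj : ∀ i j : Fin t, i ≠ j →
      Disjoint (DoubleCoset.doubleCoset (g i) (H : Set (Matrix.SpecialLinearGroup (Fin 2) D)) (BorelSub D))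
        (DoubleCoset.doubleCoset (g j) (H : Set (Matrix.SpecialLinearGroup (Fin 2) D)) (BorelSub D)))
    (hcover : ∀ x : Matrix.SpecialLinearGroup (Fin 2) D,
      ∃ i : Fin t,
        x ∈ DoubleCoset.doubleCoset (g i) (H : Set (Matrix.SpecialLinearGroup (Fin 2) D)) (BorelSub D)) :
    n = ∑ i : Fin t,
      (Ugrp D ⊔ (H.map (MulAut.conj (g i)⁻¹).toMonoidHom ⊓ BorelSub D)).relIndex (BorelSub D) *
        (qAmp H (g i)).index := by
  subst hn
  have hU : Ugrp D ≤ BorelSub D := aux_U_le_B D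
  rw [aux_doset_index H (BorelSub D) hn0 g hdisj hcover]
  refine Finset.sum_congr rfl ?_
  intro i _
  set Ki := H.map (MulAut.conj (g i)⁻¹).toMonoidHom ⊓ BorelSub D with hKi
  have hKiB : Ki ≤ BorelSub D := inf_le_right
  have hsup : Ugrp D ⊔ Ki ≤ BorelSub D := sup_le hU hKiB
  have step1 : Ki.relIndex (Ugrp D ⊔ Ki) * (Ugrp D ⊔ Ki).relIndex (BorelSub D)
      = Ki.relIndex (BorelSub D) :=
    Subgroup.relIndex_mul_relIndex Ki (Ugrp D ⊔ Ki) (BorelSub D) le_sup_right hsup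
  have step2 : Ki.relIndex (Ugrp D ⊔ Ki) = (qAmp H (g i)).index := by
    rw [← Subgroup.relIndex_subgroupOf hsup,
      Subgroup.subgroupOf_sup hU hKiB,
      aux_second_iso ((Ugrp D).subgroupOf (BorelSub D)) (Ki.subgroupOf (BorelSub D)),
      Subgroup.relIndex_subgroupOf hU]
    exact aux_qAmp H (g i)
  rw [← step1, step2, mul_comm]
end
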